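/- Let A be a nonsingular n×n (−1,1)-matrix (n ≥ 2). Then A can be transformed by standard transformations into an n×n (−1,1)-matrix B such that: (i) every entry of the first row and of the first column of B equals 1; (ii) the (n−1)×(n−1) submatrix of B obtained by deleting the first row and the first column has rank n−1 over ℚ; and (iii) |per A| = |per B|. -/

import Mathlib

open Matrix

/-- The permanent of a square matrix. -/
def per {n : ℕ} (A : Matrix (Fin n) (Fin n) ℚ) : ℚ :=
  ∑ σ : Equiv.Perm (Fin n), ∏ i, A i (σ i)

/-- `A` is obtained from `B` by standard transformations: a finite composition of row
permutations, column permutations, multiplications of rows/columns by `-1`, and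
transposition (square case). -/
def StdEquiv {n : ℕ} (A B : Matrix (Fin n) (Fin n) ℚ) : Prop :=
  ∃ (ρ σ : Equiv.Perm (Fin n)) (ε δ : Fin n → ℚ),
    (∀ i, ε i = 1 ∨ ε i = -1) ∧ (∀ j, δ j = 1 ∨ δ j = -1) ∧
    ((∀ i j, A i j = ε i * δ j * B (ρ i) (σ j)) ∨
     (∀ i j, A i j = ε i * δ j * B (σ j) (ρ i)))

lemma signMul' {a b : ℚ} (ha : a = 1 ∨ a = -1) (hb : b = 1 ∨ b = -1) :
    a * b = 1 ∨ a * b = -1 := by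
  rcases ha with h | h <;> rcases hb with h' | h' <;> simp [h, h']

lemma signSq' {a : ℚ} (ha : a = 1 ∨ a = -1) : a * a = 1 := by
  rcases ha with h | h <;> simp [h]

theorem reduction_lemma (m : ℕ) (hm : 1 ≤ m)
    (A : Matrix (Fin (m + 1)) (Fin (m + 1)) ℚ)
    (hA : ∀ i j, A i j = 1 ∨ A i j = -1) (hdet : A.det ≠ 0) :
    ∃ B : Matrix (Fin (m + 1)) (Fin (m + 1)) ℚ,
      StdEquiv A B ∧ (∀ i j, B i j = 1 ∨ B i j = -1) ∧
      (∀ j, B 0 j = 1) ∧ (∀ i, B i 0 = 1) ∧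
      (B.submatrix Fin.succ Fin.succ).rank = m ∧
      |per A| = |per B| := by
  -- find a column j₀ whose minor (deleting row 0) is nonsingular
  have hj : ∃ j : Fin (m+1), (A.submatrix Fin.succ j.succAbove).det ≠ 0 := by
    by_contra h
    push_neg at h
    apply hdet
    rw [Matrix.det_succ_row_zero]
    simp [h]
  obtain ⟨j₀, hj₀⟩ := hj
  -- the column permutation moving j₀ to position 0
  set c : Equiv.Perm (Fin (m+1)) := (finSuccEquiv' 0).trans (finSuccEquiv' j₀).symm with hc
  have hcsucc : ∀ l : Fin m, c l.succ = j₀.succAbove l := by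
    intro l
    simp only [hc, Equiv.trans_apply, ← Fin.zero_succAbove, finSuccEquiv'_succAbove,
      finSuccEquiv'_symm_some]
  -- sign normalizations
  set ε : Fin (m+1) → ℚ := fun i => A i (c 0) with hεdef
  set δ : Fin (m+1) → ℚ := fun j => A 0 (c 0) * A 0 (c j) with hδdef
  set B : Matrix (Fin (m+1)) (Fin (m+1)) ℚ := fun i j => ε i * δ j * A i (c j) with hBdef
  have hε : ∀ i, ε i = 1 ∨ ε i = -1 := fun i => hA _ _
  have hδ : ∀ j, δ j = 1 ∨ δ j = -1 := fun j => signMul' (hA _ _) (hA _ _)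
  have hBsign : ∀ i j, B i j = 1 ∨ B i j = -1 :=
    fun i j => signMul' (signMul' (hε i) (hδ j)) (hA _ _)
  refine ⟨B, ?_, hBsign, ?_, ?_, ?_, ?_⟩
  · -- StdEquiv
    refine ⟨Equiv.refl _, c.symm, ε, fun j => δ (c.symm j), hε, fun j => hδ _, Or.inl ?_⟩
    intro i j
    have : B i (c.symm j) = ε i * δ (c.symm j) * A i j := by
      rw [hBdef]; simp
    rw [Equiv.refl_apply, this]
    symm
    calc ε i * δ (c.symm j) * (ε i * δ (c.symm j) * A i j)
        = (ε i * ε i) * (δ (c.symm j) * δ (c.symm j)) * A i j := by ring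
      _ = A i j := by rw [signSq' (hε i), signSq' (hδ _)]; ring
  · -- first row
    intro j
    rw [hBdef]
    show ε 0 * δ j * A 0 (c j) = 1
    rw [hεdef, hδdef]
    have h1 := hA 0 (c 0)
    have h2 := hA 0 (c j)
    rcases h1 with h | h <;> rcases h2 with h' | h' <;> simp [h, h']
  · -- first column
    intro i
    rw [hBdef]
    show ε i * δ 0 * A i (c 0) = 1
    rw [hεdef, hδdef]
    have h1 := hA 0 (c 0)
    have h2 := hA i (c 0)
    rcases h1 with h | h <;> rcases h2 with h' | h' <;> simp [h, h']
  · -- rank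
    have key : B.submatrix Fin.succ Fin.succ =
        (Matrix.diagonal (fun k : Fin m => ε k.succ)) *
          (A.submatrix Fin.succ j₀.succAbove) *
          (Matrix.diagonal (fun l : Fin m => δ l.succ)) := by
      ext k l
      rw [Matrix.mul_apply]
      simp only [Matrix.diagonal_mul, Matrix.mul_diagonal, Matrix.submatrix_apply, hBdef,
        Matrix.diagonal_apply]
      rw [Finset.sum_eq_single l]
      · simp [hcsucc l]; show ε k.succ * δ l.succ * A k.succ (c l.succ) = _; rw [hcsucc l]; ring
      · intro b _ hb; simp [hb]
      · simp
    have hdetB : (B.submatrix Fin.succ Fin.succ).det ≠ 0 := by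
      rw [key, Matrix.det_mul, Matrix.det_mul, Matrix.det_diagonal, Matrix.det_diagonal]
      apply mul_ne_zero
      apply mul_ne_zero
      · exact Finset.prod_ne_zero_iff.2 fun k _ => by rcases hε k.succ with h | h <;> simp [h]
      · exact hj₀
      · exact Finset.prod_ne_zero_iff.2 fun l _ => by rcases hδ l.succ with h | h <;> simp [h]
    have : IsUnit (B.submatrix Fin.succ Fin.succ) := by
      rw [Matrix.isUnit_iff_isUnit_det, isUnit_iff_ne_zero]
      exact hdetB
    rw [Matrix.rank_of_isUnit _ this, Fintype.card_fin]
  · -- permanent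
    have hper : per B = ((∏ i, ε i) * ∏ j, δ j) * per A := by
      unfold per
      rw [Finset.mul_sum]
      rw [← Equiv.sum_comp (Equiv.mulLeft c) (fun σ : Equiv.Perm (Fin (m+1)) =>
        ((∏ i, ε i) * ∏ j, δ j) * ∏ i, A i (σ i))]
      refine Finset.sum_congr rfl fun σ _ => ?_
      have : ∀ i, B i (σ i) = ε i * δ (σ i) * A i ((Equiv.mulLeft c σ) i) := by
        intro i; rw [hBdef]; simp [Equiv.Perm.mul_apply]
      rw [Finset.prod_congr rfl fun i _ => this i]
      rw [Finset.prod_mul_distrib, Finset.prod_mul_distrib]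
      rw [Equiv.prod_comp σ δ]
    rw [hper, abs_mul, abs_mul, Finset.abs_prod, Finset.abs_prod]
    have h1 : ∀ i : Fin (m+1), |ε i| = 1 := fun i => by rcases hε i with h | h <;> simp [h]
    have h2 : ∀ j : Fin (m+1), |δ j| = 1 := fun j => by rcases hδ j with h | h <;> simp [h]
    simp [h1, h2]
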